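/- Let S be an infinite set regarded as a structure in the empty signature (pure equality), and let I be the directed set of finite subsets of S ordered by inclusion. Then lim_I Th(S_i^*) = Th(S^*): for every sentence φ with parameters a_1,…,a_m ∈ S, φ holds in S if and only if φ holds in S_i for all sufficiently large finite subsets S_i containing a_1,…,a_m. In particular, the first-order theory of the infinite set S is the limit of the first-order theories of its finite subsets. -/

import Mathlib

open FirstOrder Language

/-- A theory: a set of sentences closed under (semantic) logical consequence. -/
def IsClosedTheory {L : FirstOrder.Language} (Δ : L.Theory) : Prop :=
  ∀ θ : L.Sentence, Δ ⊨ᵇ θ → θ ∈ Δ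

/-- `limsup` of a family of theories: frequent membership. -/
def limsupTheory {L : FirstOrder.Language} {ι : Type*} [Preorder ι]
    (Δ : ι → L.Theory) : L.Theory :=
  { θ | ∀ i, ∃ j, i ≤ j ∧ θ ∈ Δ j }

/-- `liminf` of a family of theories: eventual membership. -/
def liminfTheory {L : FirstOrder.Language} {ι : Type*} [Preorder ι]
    (Δ : ι → L.Theory) : L.Theory :=
  { θ | ∃ i, ∀ j, i ≤ j → θ ∈ Δ j }

/-- A theory is consistent when it is not the set of all sentences. -/
def ConsistentTheory {L : FirstOrder.Language} (Δ : L.Theory) : Prop :=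
  Δ ≠ Set.univ

/-- A theory is complete when it contains each sentence or its negation. -/
def CompleteTheory' {L : FirstOrder.Language} (Δ : L.Theory) : Prop :=
  ∀ θ : L.Sentence, θ ∈ Δ ∨ θ.not ∈ Δ

instance (M : Type*) : Language.empty.Structure M := Language.emptyStructure

/-- The augmented theory of a subset `A` of `M` (in the empty signature), viewed
inside the sentences of `Language.empty[[M]]`: sentences whose parameters all come
from `A` and which are true in `A`. -/
def augTheoryE {M : Type*} (A : Set M) : (Language.empty[[M]]).Theory :=
  { φ | ∃ ψ : (Language.empty[[↥A]]).Sentence,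
      (Language.empty.lhomWithConstantsMap (Subtype.val : ↥A → M)).onSentence ψ = φ ∧
      ↥A ⊨ ψ }

namespace AugLimit

def constsT {α : Type*} [DecidableEq α] {γ : Type*} : (Language.empty[[α]]).Term γ → Finset α
  | .var _ => ∅
  | @FirstOrder.Language.Term.func _ _ 0 f _ =>
      Sum.elim (fun f => isEmptyElim f) (fun a => {a}) f
  | @FirstOrder.Language.Term.func _ _ (_+1) f _ =>
      Sum.elim (fun f => isEmptyElim f) (fun e => PEmpty.elim e) f

def consts {α β : Type*} [DecidableEq α] :
    ∀ {n}, (Language.empty[[α]]).BoundedFormula β n → Finset α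
  | _, .falsum => ∅
  | _, .equal t₁ t₂ => constsT t₁ ∪ constsT t₂
  | _, .rel R _ => Sum.elim (fun r => isEmptyElim r) (fun r => isEmptyElim r) R
  | _, .imp f₁ f₂ => consts f₁ ∪ consts f₂
  | _, .all f => consts f

def qc {α β : Type*} : ∀ {n}, (Language.empty[[α]]).BoundedFormula β n → ℕ
  | _, .falsum => 0
  | _, .equal _ _ => 0
  | _, .rel _ _ => 0
  | _, .imp f₁ f₂ => max (qc f₁) (qc f₂)
  | _, .all f => qc f + 1

def cStruct {α X : Type*} (c : α → X) : (Language.empty[[α]]).Structure X :=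
  @Language.withConstantsStructure Language.empty X _ α (constantsOn.structure c)

def rT {α X : Type*} (c : α → X) {γ : Type*} (v : γ → X) (t : (Language.empty[[α]]).Term γ) : X :=
  @Term.realize _ X (cStruct c) _ v t

def Rz {α X : Type*} (c : α → X) {β : Type*} {n : ℕ}
    (ψ : (Language.empty[[α]]).BoundedFormula β n) (v : β → X) (xs : Fin n → X) : Prop :=
  @BoundedFormula.Realize _ X (cStruct c) _ _ ψ v xs

theorem func0_ext {L : Language} {γ : Type*} (F F' : L.Functions 0) (h : F = F')
    (ts ts' : Fin 0 → L.Term γ) : Term.func F ts = Term.func F' ts' := by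
  subst h; congr; funext i; exact i.elim0

theorem rT_hom {α X Y : Type*} (g : X → Y) (c : α → X) {γ : Type*} (v : γ → X)
    (t : (Language.empty[[α]]).Term γ) :
    g (rT c v t) = rT (g ∘ c) (g ∘ v) t := by
  induction t with
  | var => rfl
  | @func n f ts ih =>
    match n, f with
    | 0, Sum.inl f => exact isEmptyElim f
    | 0, Sum.inr a => rfl
    | n+1, Sum.inl f => exact isEmptyElim f
    | n+1, Sum.inr e => exact PEmpty.elim e

theorem rT_agree {α X : Type*} [DecidableEq α] {c c' : α → X} {γ : Type*} {v : γ → X}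
    {t : (Language.empty[[α]]).Term γ} (h : ∀ a ∈ constsT t, c a = c' a) :
    rT c v t = rT c' v t := by
  induction t with
  | var => rfl
  | @func n f ts ih =>
    match n, f with
    | 0, Sum.inl f => exact isEmptyElim f
    | 0, Sum.inr a => exact h a (by simp [constsT]; exact Finset.mem_singleton_self _)
    | n+1, Sum.inl f => exact isEmptyElim f
    | n+1, Sum.inr e => exact PEmpty.elim e

theorem rT_onTerm {α' α X : Type*} (f : α' → α) (c : α → X) {γ : Type*} (v : γ → X)
    (t : (Language.empty[[α']]).Term γ) :
    rT c v ((Language.empty.lhomWithConstantsMap f).onTerm t) = rT (c ∘ f) v t := by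
  induction t with
  | var => rfl
  | @func n g ts ih =>
    match n, g with
    | 0, Sum.inl g => exact isEmptyElim g
    | 0, Sum.inr a => rfl
    | n+1, Sum.inl g => exact isEmptyElim g
    | n+1, Sum.inr e => exact PEmpty.elim e

theorem constsT_onTerm {α' α : Type*} [DecidableEq α'] [DecidableEq α] (f : α' → α)
    {γ : Type*} (t : (Language.empty[[α']]).Term γ) :
    constsT ((Language.empty.lhomWithConstantsMap f).onTerm t) = (constsT t).image f := by
  induction t with
  | var => simp [constsT, LHom.onTerm]
  | @func n g ts ih =>
    match n, g with
    | 0, Sum.inl g => exact isEmptyElim g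
    | 0, Sum.inr a => simp [constsT, LHom.onTerm]; rfl
    | n+1, Sum.inl g => exact isEmptyElim g
    | n+1, Sum.inr e => exact PEmpty.elim e

theorem onTerm_onTerm {α' α α'' : Type*} (f : α' → α) (g : α → α'')
    {γ : Type*} (t : (Language.empty[[α']]).Term γ) :
    (Language.empty.lhomWithConstantsMap g).onTerm
      ((Language.empty.lhomWithConstantsMap f).onTerm t) =
    (Language.empty.lhomWithConstantsMap (g ∘ f)).onTerm t := by
  induction t with
  | var => rfl
  | @func n h ts ih =>
    match n, h with
    | 0, Sum.inl h => exact isEmptyElim h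
    | 0, Sum.inr a => simp only [LHom.onTerm]; exact func0_ext _ _ rfl _ _
    | n+1, Sum.inl h => exact isEmptyElim h
    | n+1, Sum.inr e => exact PEmpty.elim e

theorem onTerm_fix {α : Type*} [DecidableEq α] (g : α → α)
    {γ : Type*} (t : (Language.empty[[α]]).Term γ) (h : ∀ a ∈ constsT t, g a = a) :
    (Language.empty.lhomWithConstantsMap g).onTerm t = t := by
  induction t with
  | var => rfl
  | @func n f ts ih =>
    match n, f with
    | 0, Sum.inl f => exact isEmptyElim f
    | 0, Sum.inr a =>
      have : g a = a := h a (by simp [constsT]; exact Finset.mem_singleton_self _)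
      simp only [LHom.onTerm]
      exact func0_ext _ _ (congrArg Sum.inr this) _ _
    | n+1, Sum.inl f => exact isEmptyElim f
    | n+1, Sum.inr e => exact PEmpty.elim e

/-! Formula-level lemmas -/

theorem Rz_agree {α X β : Type*} [DecidableEq α] {n : ℕ}
    (ψ : (Language.empty[[α]]).BoundedFormula β n) {c c' : α → X}
    (h : ∀ a ∈ consts ψ, c a = c' a) :
    ∀ (v : β → X) (xs : Fin n → X), Rz c ψ v xs ↔ Rz c' ψ v xs := by
  induction ψ with
  | falsum => exact fun v xs => Iff.rfl
  | @equal n t₁ t₂ =>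
    intro v xs
    show rT c _ t₁ = rT c _ t₂ ↔ rT c' _ t₁ = rT c' _ t₂
    rw [rT_agree (fun a ha => h a (Finset.mem_union_left _ ha)),
      rT_agree (fun a ha => h a (Finset.mem_union_right _ ha))]
  | rel R ts => rcases R with R | R <;> exact isEmptyElim R
  | imp f₁ f₂ ih₁ ih₂ =>
    exact fun v xs => imp_congr (ih₁ (fun a ha => h a (Finset.mem_union_left _ ha)) v xs)
      (ih₂ (fun a ha => h a (Finset.mem_union_right _ ha)) v xs)
  | all f ih =>
    exact fun v xs => forall_congr' fun x => ih h v (Fin.snoc xs x)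

theorem Rz_equiv {α X Y : Type*} (g : X ≃ Y) (c : α → X) {β : Type*} {n : ℕ}
    (ψ : (Language.empty[[α]]).BoundedFormula β n) :
    ∀ (v : β → X) (xs : Fin n → X), Rz c ψ v xs ↔ Rz (g ∘ c) ψ (g ∘ v) (g ∘ xs) := by
  induction ψ with
  | falsum => exact fun v xs => Iff.rfl
  | @equal n t₁ t₂ =>
    intro v xs
    show rT c _ t₁ = rT c _ t₂ ↔ rT (g ∘ c) _ t₁ = rT (g ∘ c) _ t₂
    have e : (g ∘ Sum.elim v xs) = Sum.elim (g ∘ v) (g ∘ xs) := by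
      funext x; cases x <;> rfl
    rw [← e, ← rT_hom, ← rT_hom]
    exact g.injective.eq_iff.symm
  | rel R ts => rcases R with R | R <;> exact isEmptyElim R
  | imp f₁ f₂ ih₁ ih₂ => exact fun v xs => imp_congr (ih₁ v xs) (ih₂ v xs)
  | all f ih =>
    intro v xs
    constructor
    · intro h y
      have := (ih v (Fin.snoc xs (g.symm y))).mp (h (g.symm y))
      rwa [Fin.comp_snoc, Equiv.apply_symm_apply] at this
    · intro h x
      have := h (g x)
      rw [← Fin.comp_snoc] at this
      exact (ih v (Fin.snoc xs x)).mpr this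

theorem Rz_onBF {α' α X : Type*} (f : α' → α) (c : α → X) {β : Type*} {n : ℕ}
    (ψ : (Language.empty[[α']]).BoundedFormula β n) :
    ∀ (v : β → X) (xs : Fin n → X),
    Rz c ((Language.empty.lhomWithConstantsMap f).onBoundedFormula ψ) v xs ↔
      Rz (c ∘ f) ψ v xs := by
  induction ψ with
  | falsum => exact fun v xs => Iff.rfl
  | @equal n t₁ t₂ =>
    intro v xs
    show rT c _ _ = rT c _ _ ↔ rT (c ∘ f) _ t₁ = rT (c ∘ f) _ t₂
    rw [rT_onTerm, rT_onTerm]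
  | rel R ts => rcases R with R | R <;> exact isEmptyElim R
  | imp f₁ f₂ ih₁ ih₂ => exact fun v xs => imp_congr (ih₁ v xs) (ih₂ v xs)
  | all f ih => exact fun v xs => forall_congr' fun x => ih v (Fin.snoc xs x)

theorem consts_onBF {α' α : Type*} [DecidableEq α'] [DecidableEq α] (f : α' → α)
    {β : Type*} {n : ℕ} (ψ : (Language.empty[[α']]).BoundedFormula β n) :
    consts ((Language.empty.lhomWithConstantsMap f).onBoundedFormula ψ) =
      (consts ψ).image f := by
  induction ψ with
  | falsum => simp [consts, LHom.onBoundedFormula]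
  | equal t₁ t₂ =>
    simp [consts, LHom.onBoundedFormula, Term.bdEqual, constsT_onTerm, Finset.image_union]
  | rel R ts => rcases R with R | R <;> exact isEmptyElim R
  | imp f₁ f₂ ih₁ ih₂ =>
    simp [consts, LHom.onBoundedFormula, ih₁, ih₂, Finset.image_union]
  | all f ih => simpa [consts, LHom.onBoundedFormula] using ih

theorem qc_onBF {α' α : Type*} (f : α' → α)
    {β : Type*} {n : ℕ} (ψ : (Language.empty[[α']]).BoundedFormula β n) :
    qc ((Language.empty.lhomWithConstantsMap f).onBoundedFormula ψ) = qc ψ := by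
  induction ψ with
  | falsum => rfl
  | equal t₁ t₂ => rfl
  | rel R ts => rcases R with R | R <;> exact isEmptyElim R
  | imp f₁ f₂ ih₁ ih₂ => simp [qc, LHom.onBoundedFormula, ih₁, ih₂]
  | all f ih => simp [qc, LHom.onBoundedFormula, ih]

theorem onBF_onBF {α' α α'' : Type*} (f : α' → α) (g : α → α'')
    {β : Type*} {n : ℕ} (ψ : (Language.empty[[α']]).BoundedFormula β n) :
    (Language.empty.lhomWithConstantsMap g).onBoundedFormula
      ((Language.empty.lhomWithConstantsMap f).onBoundedFormula ψ) =
    (Language.empty.lhomWithConstantsMap (g ∘ f)).onBoundedFormula ψ := by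
  induction ψ with
  | falsum => rfl
  | equal t₁ t₂ =>
    simp only [LHom.onBoundedFormula, Term.bdEqual, onTerm_onTerm]
  | rel R ts => rcases R with R | R <;> exact isEmptyElim R
  | imp f₁ f₂ ih₁ ih₂ => simp [LHom.onBoundedFormula, ih₁, ih₂]
  | all f ih => simp [LHom.onBoundedFormula, ih]

theorem onBF_fix {α : Type*} [DecidableEq α] (g : α → α)
    {β : Type*} {n : ℕ} (ψ : (Language.empty[[α]]).BoundedFormula β n)
    (h : ∀ a ∈ consts ψ, g a = a) :
    (Language.empty.lhomWithConstantsMap g).onBoundedFormula ψ = ψ := by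
  induction ψ with
  | falsum => rfl
  | equal t₁ t₂ =>
    simp only [LHom.onBoundedFormula, Term.bdEqual]
    rw [onTerm_fix g t₁ (fun a ha => h a (Finset.mem_union_left _ ha)),
      onTerm_fix g t₂ (fun a ha => h a (Finset.mem_union_right _ ha))]
  | rel R ts => rcases R with R | R <;> exact isEmptyElim R
  | imp f₁ f₂ ih₁ ih₂ =>
    rw [LHom.onBoundedFormula,
      ih₁ (fun a ha => h a (Finset.mem_union_left _ ha)),
      ih₂ (fun a ha => h a (Finset.mem_union_right _ ha))]
  | all f ih => rw [LHom.onBoundedFormula, ih h]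

/-- Key transfer: truth of a formula in a large finite subset agrees with truth in `M`. -/
theorem key {M α : Type*} [DecidableEq M] [DecidableEq α] {n : ℕ}
    (ψ : (Language.empty[[α]]).BoundedFormula Empty n) :
    ∀ (B s : Finset M), s ⊆ B → s.card + n + qc ψ ≤ B.card →
    ∀ (c : α → M), (∀ a ∈ consts ψ, c a ∈ s) →
    ∀ (cB : α → ↥(B : Set M)), (∀ a ∈ consts ψ, (cB a : M) = c a) →
    ∀ (v : Empty → ↥(B : Set M)) (xs : Fin n → ↥(B : Set M)),
      (Rz cB ψ v xs ↔ Rz c ψ (Subtype.val ∘ v) (Subtype.val ∘ xs)) := by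
  induction ψ with
  | falsum => intros; exact Iff.rfl
  | @equal n t₁ t₂ =>
    intro B s hsB hcard c hc cB hagree v xs
    show rT cB _ t₁ = rT cB _ t₂ ↔ rT c _ t₁ = rT c _ t₂
    have hval : ∀ t : (Language.empty[[α]]).Term (Empty ⊕ Fin n),
        (∀ a ∈ constsT t, (cB a : M) = c a) →
        Subtype.val (rT cB (Sum.elim v xs) t) =
          rT c (Sum.elim (Subtype.val ∘ v) (Subtype.val ∘ xs)) t := by
      intro t ht
      rw [rT_hom (Subtype.val) cB (Sum.elim v xs) t]
      have e : (Subtype.val ∘ Sum.elim v xs) =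
          Sum.elim (Subtype.val ∘ v) (Subtype.val ∘ xs) := by funext x; cases x <;> rfl
      rw [e]
      exact rT_agree ht
    rw [← hval t₁ (fun a ha => hagree a (Finset.mem_union_left _ ha)),
      ← hval t₂ (fun a ha => hagree a (Finset.mem_union_right _ ha))]
    exact Subtype.val_injective.eq_iff.symm
  | rel R ts => rcases R with R | R <;> exact isEmptyElim R
  | imp f₁ f₂ ih₁ ih₂ =>
    intro B s hsB hcard c hc cB hagree v xs
    have h₁ := ih₁ B s hsB (by simp [qc] at hcard ⊢; omega) c
      (fun a ha => hc a (Finset.mem_union_left _ ha)) cB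
      (fun a ha => hagree a (Finset.mem_union_left _ ha)) v xs
    have h₂ := ih₂ B s hsB (by simp [qc] at hcard ⊢; omega) c
      (fun a ha => hc a (Finset.mem_union_right _ ha)) cB
      (fun a ha => hagree a (Finset.mem_union_right _ ha)) v xs
    exact imp_congr h₁ h₂
  | @all n f ih =>
    intro B s hsB hcard c hc cB hagree v xs
    have hcard' : s.card + (n + 1) + qc f ≤ B.card := by simp [qc] at hcard; omega
    constructor
    · intro h m
      show Rz c f (Subtype.val ∘ v) (Fin.snoc (Subtype.val ∘ xs) m)
      by_cases hm : m ∈ B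
      · have hm' : m ∈ (B : Set M) := hm
        have := (ih B s hsB hcard' c hc cB hagree v (Fin.snoc xs ⟨m, hm'⟩)).mp (h ⟨m, hm'⟩)
        rwa [show Subtype.val ∘ Fin.snoc xs (⟨m, hm'⟩ : ↥(B : Set M)) =
          Fin.snoc (Subtype.val ∘ xs) m from Fin.comp_snoc _ _ _] at this
      · -- fresh element
        set U : Finset M := s ∪ Finset.image (fun i => (xs i : M)) Finset.univ with hU
        have hUcard : U.card < B.card := by
          have h1 : U.card ≤ s.card + n := by
            refine le_trans (Finset.card_union_le _ _) ?_
            have := Finset.card_image_le (s := (Finset.univ : Finset (Fin n)))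
              (f := fun i => (xs i : M))
            simp at this
            omega
          omega
        obtain ⟨b, hbB, hbU⟩ : ∃ b ∈ B, b ∉ U := by
          by_contra hcon
          push_neg at hcon
          exact absurd (Finset.card_le_card hcon) (not_le.mpr hUcard)
        have hbs : b ∉ s := fun hb => hbU (Finset.mem_union_left _ hb)
        have hbxs : ∀ i, b ≠ (xs i : M) := by
          intro i hbi
          exact hbU (Finset.mem_union_right _ (Finset.mem_image.mpr ⟨i, Finset.mem_univ _, hbi.symm⟩))
        have hms : m ∉ s := fun hms => hm (hsB hms)
        have hmxs : ∀ i, m ≠ (xs i : M) := fun i hmi => hm (by rw [hmi]; exact (xs i).2)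
        have hmb : m ≠ b := fun h' => hm (h' ▸ hbB)
        set σ := Equiv.swap m b with hσ
        -- transfer truth at m to truth at b
        have hswap := Rz_equiv σ c f (Subtype.val ∘ v) (Fin.snoc (Subtype.val ∘ xs) m)
        have hσxs : σ ∘ (Fin.snoc (Subtype.val ∘ xs) m : Fin (n+1) → M) =
            Fin.snoc (Subtype.val ∘ xs) b := by
          have h1 : σ ∘ (Subtype.val ∘ xs) = Subtype.val ∘ xs :=
            funext fun i => Equiv.swap_apply_of_ne_of_ne (Ne.symm (hmxs i)) (Ne.symm (hbxs i))
          rw [Fin.comp_snoc, h1, Equiv.swap_apply_left m b]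
        have hσv : σ ∘ (Subtype.val ∘ v) = Subtype.val ∘ v := funext fun e => e.elim
        rw [hσxs, hσv] at hswap
        have hagree' : ∀ a ∈ consts f, σ (c a) = c a := by
          intro a ha
          exact Equiv.swap_apply_of_ne_of_ne
            (fun h' => hms (h' ▸ hc a ha)) (fun h' => hbs (h' ▸ hc a ha))
        have hag := Rz_agree f (c := σ ∘ c) (c' := c)
          (fun a ha => hagree' a ha) (Subtype.val ∘ v) (Fin.snoc (Subtype.val ∘ xs) b)
        rw [hswap, hag]
        -- now use ih with b
        have hb' : b ∈ (B : Set M) := hbB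
        have := (ih B s hsB hcard' c hc cB hagree v (Fin.snoc xs ⟨b, hb'⟩)).mp (h ⟨b, hb'⟩)
        rwa [show Subtype.val ∘ Fin.snoc xs (⟨b, hb'⟩ : ↥(B : Set M)) =
          Fin.snoc (Subtype.val ∘ xs) b from Fin.comp_snoc _ _ _] at this
    · intro h b
      have := h (b : M)
      have h2 := (ih B s hsB hcard' c hc cB hagree v (Fin.snoc xs b)).mpr
      rw [show Subtype.val ∘ Fin.snoc xs b = Fin.snoc (Subtype.val ∘ xs) (b : M) from
        Fin.comp_snoc _ _ _] at h2
      exact h2 this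

theorem sent_iff {M : Type*} (φ : (Language.empty[[M]]).Sentence) :
    (M ⊨ φ) ↔ Rz (id : M → M) φ default default := Iff.rfl

theorem sub_sent_iff {M : Type*} (A : Set M) (ψ : (Language.empty[[↥A]]).Sentence) :
    (↥A ⊨ ψ) ↔ Rz (id : ↥A → ↥A) ψ default default := Iff.rfl

theorem empty_funext {X : Type*} (f g : Empty → X) : f = g := funext fun e => e.elim

theorem fin0_funext {X : Type*} (f g : Fin 0 → X) : f = g := funext fun i => i.elim0

theorem mem_to_truth {M : Type*} [DecidableEq M] {B : Finset M}
    {φ : (Language.empty[[M]]).Sentence}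
    (hcard : (consts φ).card + qc φ ≤ B.card)
    (h : φ ∈ augTheoryE (↑B : Set M)) : M ⊨ φ := by
  classical
  obtain ⟨ψ, himg, htrue⟩ := h
  have hc : consts φ = (consts ψ).image (Subtype.val) := by
    rw [← himg]; exact consts_onBF _ ψ
  have hq : qc φ = qc ψ := by rw [← himg]; exact qc_onBF _ ψ
  set s : Finset M := (consts ψ).image Subtype.val with hs
  have hsB : s ⊆ B := by
    intro a ha
    obtain ⟨x, -, rfl⟩ := Finset.mem_image.mp ha
    exact x.2
  have hkey := key ψ B s hsB (by rw [hc, hq] at hcard; omega)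
    Subtype.val (fun a ha => Finset.mem_image_of_mem _ ha)
    id (fun a _ => rfl) default default
  have htrue' : Rz (id : ↥(↑B : Set M) → _) ψ default default :=
    (sub_sent_iff _ ψ).mp htrue
  have hM : Rz (Subtype.val : ↥(↑B : Set M) → M) ψ default default := by
    have := hkey.mp htrue'
    rwa [empty_funext (Subtype.val ∘ default) default,
      fin0_funext (Subtype.val ∘ default) default] at this
  rw [← himg, sent_iff]
  show Rz (id : M → M)
    ((Language.empty.lhomWithConstantsMap (Subtype.val : ↥(↑B : Set M) → M)).onBoundedFormula ψ)
    default default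
  rw [Rz_onBF, Function.id_comp]
  exact hM

theorem truth_to_mem {M : Type*} [DecidableEq M] {B : Finset M}
    {φ : (Language.empty[[M]]).Sentence}
    (hcard : (consts φ).card + qc φ ≤ B.card)
    (hsub : consts φ ⊆ B) (hne : B.Nonempty) (h : M ⊨ φ) :
    φ ∈ augTheoryE (↑B : Set M) := by
  obtain ⟨b₀, hb₀⟩ := hne
  have hb₀' : b₀ ∈ (↑B : Set M) := hb₀
  set r : M → ↥(↑B : Set M) := fun x => if hx : x ∈ B then ⟨x, hx⟩ else ⟨b₀, hb₀'⟩ with hr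
  have hrval : ∀ a ∈ consts φ, Subtype.val (r a) = a := by
    intro a ha
    have haB : a ∈ B := hsub ha
    simp [hr, dif_pos haB]
  refine ⟨(Language.empty.lhomWithConstantsMap r).onSentence φ, ?_, ?_⟩
  · show (Language.empty.lhomWithConstantsMap (Subtype.val : ↥(↑B : Set M) → M)).onBoundedFormula
      ((Language.empty.lhomWithConstantsMap r).onBoundedFormula φ) = φ
    rw [onBF_onBF]
    exact onBF_fix _ φ hrval
  · rw [sub_sent_iff]
    show Rz (id : ↥(↑B : Set M) → _)
      ((Language.empty.lhomWithConstantsMap r).onBoundedFormula φ) default default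
    rw [Rz_onBF, Function.id_comp]
    have hkey := key φ B (consts φ) hsub (by omega) id (fun a ha => ha) r
      (fun a ha => hrval a ha) default default
    refine hkey.mpr ?_
    rw [empty_funext (Subtype.val ∘ default) default,
      fin0_funext (Subtype.val ∘ default) default]
    exact (sent_iff φ).mp h

end AugLimit



theorem limit_augTheory_finite_subsets_of_infinite (M : Type*) [Infinite M] :
    limsupTheory (fun A : Finset M => augTheoryE (↑A : Set M)) =
        (Language.empty[[M]]).completeTheory M ∧
    liminfTheory (fun A : Finset M => augTheoryE (↑A : Set M)) =
        (Language.empty[[M]]).completeTheory M ∧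
    ∀ φ : (Language.empty[[M]]).Sentence,
      M ⊨ φ ↔ ∃ A : Finset M, ∀ B : Finset M, A ≤ B → φ ∈ augTheoryE (↑B : Set M) := by
  classical
  have part3 : ∀ φ : (Language.empty[[M]]).Sentence,
      M ⊨ φ ↔ ∃ A : Finset M, ∀ B : Finset M, A ≤ B → φ ∈ augTheoryE (↑B : Set M) := by
    intro φ
    constructor
    · intro h
      obtain ⟨A, hA, hAcard⟩ := Infinite.exists_superset_card_eq (AugLimit.consts φ)
        ((AugLimit.consts φ).card + AugLimit.qc φ + 1) (by omega)
      refine ⟨A, fun B hB => ?_⟩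
      have hB' : A ⊆ B := hB
      have hcardB : (AugLimit.consts φ).card + AugLimit.qc φ ≤ B.card := by
        have := Finset.card_le_card hB'
        omega
      refine AugLimit.truth_to_mem hcardB (hA.trans hB') ?_ h
      rw [← Finset.card_pos]
      have := Finset.card_le_card hB'
      omega
    · rintro ⟨A, hA⟩
      obtain ⟨B, hB, hBcard⟩ := Infinite.exists_superset_card_eq A
        (A.card + ((AugLimit.consts φ).card + AugLimit.qc φ)) (by omega)
      exact AugLimit.mem_to_truth (by omega) (hA B hB)
  refine ⟨?_, ?_, part3⟩
  · ext φ
    simp only [limsupTheory, Set.mem_setOf_eq, mem_completeTheory]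
    constructor
    · intro h
      obtain ⟨i₀, -, hi₀card⟩ := Infinite.exists_superset_card_eq (∅ : Finset M)
        ((AugLimit.consts φ).card + AugLimit.qc φ) (by simp)
      obtain ⟨j, hij, hmem⟩ := h i₀
      have hij' : i₀ ⊆ j := hij
      exact AugLimit.mem_to_truth (by have := Finset.card_le_card hij'; omega) hmem
    · intro h i
      obtain ⟨j, hj, hjcard⟩ := Infinite.exists_superset_card_eq (i ∪ AugLimit.consts φ)
        ((i ∪ AugLimit.consts φ).card + (AugLimit.consts φ).card + AugLimit.qc φ + 1) (by omega)
      refine ⟨j, ?_, AugLimit.truth_to_mem (by omega) ?_ ?_ h⟩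
      · exact Finset.Subset.trans Finset.subset_union_left hj
      · exact Finset.Subset.trans Finset.subset_union_right hj
      · rw [← Finset.card_pos]; omega
  · ext φ
    simp only [liminfTheory, Set.mem_setOf_eq, mem_completeTheory]
    constructor
    · rintro ⟨i, hi⟩
      obtain ⟨j, hj, hjcard⟩ := Infinite.exists_superset_card_eq i
        (i.card + ((AugLimit.consts φ).card + AugLimit.qc φ)) (by omega)
      exact AugLimit.mem_to_truth (by omega) (hi j hj)
    · intro h
      obtain ⟨A, hA⟩ := (part3 φ).mp h
      exact ⟨A, fun j hj => hA j hj⟩
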